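/- Let n ≥ 1 and r_n = n(n+1)/2. Index the coordinates of ℤ^{r_n} by the segments of {1,…,n} listed in decreasing lexicographic order, and for a dominant word μ let v(μ) ∈ ℕ^{r_n} be its multiplicity vector. Then for any two dominant words μ, ν over {1,…,n}: μ < ν in the lexicographic order on words if and only if v(μ) ≠ v(ν) and the first nonzero coordinate of v(ν) − v(μ) (with respect to the chosen coordinate order) is positive. -/

import Mathlib

/-- The segment ⟨k,l⟩, i.e. the word (k, k+1, …, l). -/
def segWord (k l : ℕ) : List ℕ := List.range' k (l + 1 - k)

/-- `w` is a segment of the alphabet {1,…,n}. -/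
def IsSegment (n : ℕ) (w : List ℕ) : Prop :=
  ∃ k l : ℕ, 1 ≤ k ∧ k ≤ l ∧ l ≤ n ∧ w = segWord k l

/-- The segments of {1,…,n}, enumerated in decreasing lexicographic order
(first component descending, then second component descending). -/
def segEnum (n : ℕ) : List (ℕ × ℕ) :=
  ((List.range' 1 n).reverse.map fun k =>
    (List.range' k (n + 1 - k)).reverse.map fun l => (k, l)).flatten

/-- The multiplicity vector of a dominant word with canonical factorization `fs`:
the list of multiplicities of the segments, in decreasing lexicographic order of segments. -/
def multVec (n : ℕ) (fs : List (List ℕ)) : List ℕ :=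
  (segEnum n).map fun p => fs.count (segWord p.1 p.2)

/-! ### Auxiliary development -/

/-- validity of a pair as a segment descriptor -/
def pvalid (p : ℕ × ℕ) : Prop := 1 ≤ p.1 ∧ p.1 ≤ p.2

/-- lexicographic order on pairs -/
def plt (p q : ℕ × ℕ) : Prop := p.1 < q.1 ∨ (p.1 = q.1 ∧ p.2 < q.2)

lemma plt_trichot {p q : ℕ × ℕ} (h : p ≠ q) : plt p q ∨ plt q p := by
  rcases p with ⟨a, b⟩; rcases q with ⟨c, d⟩
  simp only [ne_eq, Prod.mk.injEq, not_and] at h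
  simp only [plt]
  by_cases hac : a = c
  · subst hac; rcases Nat.lt_or_ge b d with h' | h'
    · exact Or.inl (Or.inr ⟨rfl, h'⟩)
    · exact Or.inr (Or.inr ⟨rfl, lt_of_le_of_ne h' (fun hh => h rfl hh.symm)⟩)
  · rcases Nat.lt_or_ge a c with h' | h'
    · exact Or.inl (Or.inl h')
    · exact Or.inr (Or.inl (lt_of_le_of_ne h' (Ne.symm hac)))

lemma segWord_cons {k l : ℕ} (h : k ≤ l) : segWord k l = k :: segWord (k + 1) l := by
  unfold segWord
  have h1 : l + 1 - k = (l - k) + 1 := by omega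
  have h2 : l + 1 - (k + 1) = l - k := by omega
  rw [h1, h2, List.range'_succ]

lemma segWord_ne_nil {k l : ℕ} (h : k ≤ l) : segWord k l ≠ [] := by
  rw [segWord_cons h]; simp

lemma segWord_split {k l' l : ℕ} (h1 : k ≤ l' + 1) (h2 : l' ≤ l) :
    segWord k l = segWord k l' ++ segWord (l' + 1) l := by
  unfold segWord
  have e1 : l + 1 - k = (l' + 1 - k) + (l + 1 - (l' + 1)) := by omega
  have e2 : l' + 1 = k + 1 * (l' + 1 - k) := by omega
  rw [e1, ← List.range'_append (s := k) (m := l' + 1 - k) (n := l + 1 - (l' + 1)) (step := 1), ← e2]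

/-- the word associated to a list of segment descriptors -/
def wordOf (qs : List (ℕ × ℕ)) : List ℕ := (qs.map fun q => segWord q.1 q.2).flatten

@[simp] lemma wordOf_nil : wordOf [] = [] := rfl

@[simp] lemma wordOf_cons (q : ℕ × ℕ) (A : List (ℕ × ℕ)) :
    wordOf (q :: A) = segWord q.1 q.2 ++ wordOf A := by simp [wordOf]

@[simp] lemma wordOf_append (A B : List (ℕ × ℕ)) :
    wordOf (A ++ B) = wordOf A ++ wordOf B := by simp [wordOf]

lemma lex_append_self (u v : List ℕ) (hv : v ≠ []) : List.Lex (· < ·) u (u ++ v) := by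
  induction u with
  | nil =>
    cases v with
    | nil => exact absurd rfl hv
    | cons a t => exact List.Lex.nil
  | cons a t ih => exact List.Lex.cons ih

lemma lex_append_left_iff (c u v : List ℕ) :
    List.Lex (· < ·) (c ++ u) (c ++ v) ↔ List.Lex (· < ·) u v := by
  induction c with
  | nil => simp
  | cons a c ih =>
    constructor
    · intro h
      cases h with
      | rel h => exact absurd h (lt_irrefl a)
      | cons h => exact ih.mp h
    · intro h
      exact List.Lex.cons (ih.mpr h)

lemma segW_lt {q p : ℕ × ℕ} (hq : pvalid q) (hp : pvalid p) (h : plt q p) :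
    List.Lex (· < ·) (segWord q.1 q.2) (segWord p.1 p.2) := by
  rcases h with h1 | ⟨heq, h2⟩
  · rw [segWord_cons hq.2, segWord_cons hp.2]
    exact List.Lex.rel h1
  · have hsplit : segWord p.1 p.2 = segWord p.1 q.2 ++ segWord (q.2 + 1) p.2 :=
      segWord_split (by have h1 := hq.2; omega) (le_of_lt h2)
    rw [hsplit, ← heq]
    exact lex_append_self _ _ (segWord_ne_nil (by omega))

lemma segW_lt' {q p : ℕ × ℕ} (hq : pvalid q) (hp : pvalid p) (h : plt q p) :
    segWord q.1 q.2 < segWord p.1 p.2 := segW_lt hq hp h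

/-- key lemma: a product of segments all strictly below ⟨k,l⟩ is lexicographically
smaller than any word starting with ⟨k,l⟩. -/
lemma lemC {k l : ℕ} (hkl : k ≤ l) (xs : List (ℕ × ℕ))
    (hxs : ∀ q ∈ xs, pvalid q ∧ plt q (k, l)) (z : List ℕ) :
    List.Lex (· < ·) (wordOf xs) (segWord k l ++ z) := by
  cases xs with
  | nil =>
    rw [wordOf_nil, segWord_cons hkl]
    exact List.Lex.nil
  | cons q xs' =>
    obtain ⟨hqv, hqlt⟩ := hxs q (List.mem_cons_self)
    rcases hqlt with h1 | ⟨heq, h2⟩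
    · rw [wordOf_cons, segWord_cons hqv.2, segWord_cons hkl, List.cons_append, List.cons_append]
      exact List.Lex.rel h1
    · have hk : k ≤ q.2 := by have := hqv.2; omega
      have hsplit : segWord k l = segWord k q.2 ++ segWord (q.2 + 1) l :=
        segWord_split (by omega) (le_of_lt h2)
      rw [wordOf_cons, heq, hsplit, List.append_assoc]
      apply List.Lex.append_left
      rw [segWord_cons (show q.2 + 1 ≤ l by omega), List.cons_append]
      cases xs' with
      | nil => exact List.Lex.nil
      | cons r xs'' =>
        obtain ⟨hrv, hrlt⟩ := hxs r (by simp)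
        rw [wordOf_cons, segWord_cons hrv.2, List.cons_append]
        refine List.Lex.rel ?_
        have : r.1 ≤ k := by rcases hrlt with h | ⟨h, _⟩ <;> omega
        omega

/-- the list of segment descriptors determined by counts -/
def PS : List (ℕ × ℕ) → List ℕ → List (ℕ × ℕ)
  | p :: ps, c :: m => List.replicate c p ++ PS ps m
  | _, _ => []

@[simp] lemma PS_nil (m : List ℕ) : PS [] m = [] := by cases m <;> rfl

@[simp] lemma PS_nil' (ps : List (ℕ × ℕ)) : PS ps [] = [] := by cases ps <;> rfl

@[simp] lemma PS_cons (p : ℕ × ℕ) (ps : List (ℕ × ℕ)) (c : ℕ) (m : List ℕ) :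
    PS (p :: ps) (c :: m) = List.replicate c p ++ PS ps m := rfl

lemma mem_PS {q : ℕ × ℕ} : ∀ {ps : List (ℕ × ℕ)} {m : List ℕ}, q ∈ PS ps m → q ∈ ps := by
  intro ps
  induction ps with
  | nil => intro m h; simp at h
  | cons p ps ih =>
    intro m h
    cases m with
    | nil => simp at h
    | cons c m =>
      rw [PS_cons, List.mem_append] at h
      rcases h with h | h
      · simp at h; simp [h.2]
      · exact List.mem_cons_of_mem _ (ih h)

lemma wordOf_replicate_succ (c : ℕ) (p : ℕ × ℕ) :
    wordOf (List.replicate (c + 1) p) = segWord p.1 p.2 ++ wordOf (List.replicate c p) := by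
  rw [List.replicate_succ, wordOf_cons]

/-- first-difference comparison of count vectors -/
def LtC : List ℕ → List ℕ → Prop
  | a :: as, b :: bs => a < b ∨ (a = b ∧ LtC as bs)
  | _, _ => False

@[simp] lemma LtC_cons (a b : ℕ) (as bs : List ℕ) :
    LtC (a :: as) (b :: bs) ↔ (a < b ∨ (a = b ∧ LtC as bs)) := Iff.rfl

@[simp] lemma LtC_nil (m : List ℕ) : ¬ LtC [] m := by cases m <;> exact fun h => h

lemma lemB_strict {p : ℕ × ℕ} {ps : List (ℕ × ℕ)}
    (hval : ∀ r ∈ p :: ps, pvalid r)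
    (hsort : List.Pairwise (fun x y => plt y x) (p :: ps))
    {a b : ℕ} (hab : a < b) (m1 m2 : List ℕ) :
    List.Lex (· < ·) (wordOf (PS (p :: ps) (a :: m1))) (wordOf (PS (p :: ps) (b :: m2))) := by
  have hpv : pvalid p := hval p (List.mem_cons_self)
  have hb : b = a + ((b - a - 1) + 1) := by omega
  rw [PS_cons, PS_cons, hb, List.replicate_add, wordOf_append, wordOf_append, wordOf_append,
    wordOf_replicate_succ, List.append_assoc, List.append_assoc]
  apply List.Lex.append_left
  refine lemC hpv.2 (PS ps m1) ?_ _
  intro q hq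
  have hq' : q ∈ ps := mem_PS hq
  exact ⟨hval q (List.mem_cons_of_mem _ hq'), List.rel_of_pairwise_cons hsort hq'⟩

lemma lemB : ∀ (ps : List (ℕ × ℕ)), (∀ p ∈ ps, pvalid p) →
    List.Pairwise (fun x y => plt y x) ps →
    ∀ (m1 m2 : List ℕ), m1.length = ps.length → m2.length = ps.length →
    (List.Lex (· < ·) (wordOf (PS ps m1)) (wordOf (PS ps m2)) ↔ LtC m1 m2) := by
  intro ps
  induction ps with
  | nil =>
    intro _ _ m1 m2 h1 h2
    simp only [List.length_nil, List.length_eq_zero_iff] at h1 h2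
    subst h1; subst h2
    simp only [PS_nil, wordOf_nil, LtC_nil, iff_false]
    intro h; cases h
  | cons p ps ih =>
    intro hval hsort m1 m2 h1 h2
    cases m1 with
    | nil => simp at h1
    | cons a m1 =>
    cases m2 with
    | nil => simp at h2
    | cons b m2 =>
      simp only [List.length_cons, Nat.add_right_cancel_iff] at h1 h2
      rcases lt_trichotomy a b with hab | hab | hab
      · simp only [LtC_cons]
        exact ⟨fun _ => Or.inl hab, fun _ => lemB_strict hval hsort hab m1 m2⟩
      · subst hab
        rw [PS_cons, PS_cons, wordOf_append, wordOf_append, lex_append_left_iff]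
        rw [ih (fun r hr => hval r (List.mem_cons_of_mem _ hr)) hsort.tail m1 m2 h1 h2]
        simp [lt_irrefl]
      · have hrev : List.Lex (· < ·) (wordOf (PS (p :: ps) (b :: m2)))
            (wordOf (PS (p :: ps) (a :: m1))) := lemB_strict hval hsort hab m2 m1
        constructor
        · intro h
          exact absurd (show wordOf (PS (p :: ps) (a :: m1)) < wordOf (PS (p :: ps) (b :: m2))
            from h) (lt_asymm (show _ < _ from hrev))
        · intro h
          rcases h with h | ⟨h, _⟩ <;> omega

/-- Step A: a weakly decreasing list of segments is recovered from its counts. -/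
lemma PS_zero : ∀ ps : List (ℕ × ℕ), PS ps (ps.map fun _ => (0 : ℕ)) = [] := by
  intro ps
  induction ps with
  | nil => simp
  | cons p ps ih => simpa using ih

lemma stepA : ∀ (N : ℕ) (fs : List (List ℕ)) (ps : List (ℕ × ℕ)),
    fs.length + ps.length ≤ N →
    (∀ p ∈ ps, pvalid p) →
    List.Pairwise (fun x y => plt y x) ps →
    List.Pairwise (· ≥ ·) fs →
    (∀ u ∈ fs, ∃ p ∈ ps, u = segWord p.1 p.2) →
    fs = (PS ps (ps.map fun p => fs.count (segWord p.1 p.2))).map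
      (fun q => segWord q.1 q.2) := by
  intro N
  induction N with
  | zero =>
    intro fs ps hN _ _ _ hmem
    have : fs = [] := by
      cases fs with
      | nil => rfl
      | cons u fs => simp at hN
    subst this
    have e : ps.map (fun p => List.count (segWord p.1 p.2) ([] : List (List ℕ)))
        = ps.map (fun _ => 0) := List.map_congr_left (fun p _ => List.count_nil)
    rw [e, PS_zero]
    simp
  | succ N ihN =>
    intro fs ps hN hval hsort hdec hmem
    cases fs with
    | nil =>
      have e : ps.map (fun p => List.count (segWord p.1 p.2) ([] : List (List ℕ)))
          = ps.map (fun _ => 0) := List.map_congr_left (fun p _ => List.count_nil)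
      rw [e, PS_zero]
      simp
    | cons u fs =>
      obtain ⟨q, hqmem, hqu⟩ := hmem u (List.mem_cons_self)
      cases ps with
      | nil => simp at hqmem
      | cons p ps =>
      have hpv : pvalid p := hval p (List.mem_cons_self)
      rcases List.mem_cons.mp hqmem with hq | hq
      · -- q = p : the head is the largest segment
        subst hq
        have hcount_head : List.count (segWord q.1 q.2) (u :: fs)
            = List.count (segWord q.1 q.2) fs + 1 := by
          rw [hqu, List.count_cons_self]
        have hcount_tail : ∀ r ∈ ps,
            List.count (segWord r.1 r.2) (u :: fs) = List.count (segWord r.1 r.2) fs := by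
          intro r hr
          have hrlt : plt r q := List.rel_of_pairwise_cons hsort hr
          have hrv : pvalid r := hval r (List.mem_cons_of_mem _ hr)
          have : segWord r.1 r.2 ≠ u := by
            rw [hqu]
            exact ne_of_lt (segW_lt' hrv hpv hrlt)
          exact List.count_cons_of_ne (l := fs) this.symm
        have ihfs := ihN fs (q :: ps) (by simp at hN ⊢; omega) hval hsort hdec.tail
          (fun v hv => hmem v (List.mem_cons_of_mem _ hv))
        have e1 : (q :: ps).map (fun p => List.count (segWord p.1 p.2) (u :: fs))
            = (List.count (segWord q.1 q.2) fs + 1)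
              :: ps.map (fun p => List.count (segWord p.1 p.2) fs) := by
          rw [List.map_cons, hcount_head, List.map_congr_left hcount_tail]
        rw [e1, PS_cons, List.replicate_succ, List.cons_append, List.map_cons]
        simp only [List.map_cons, PS_cons] at ihfs
        exact List.cons_eq_cons.mpr ⟨hqu, ihfs⟩
      · -- q ∈ ps : the largest segment does not occur
        have hqv : pvalid q := hval q (List.mem_cons_of_mem _ hq)
        have hqltp : plt q p := List.rel_of_pairwise_cons hsort hq
        have hult : u < segWord p.1 p.2 := by
          rw [hqu]; exact segW_lt' hqv hpv hqltp
        have hcount0 : List.count (segWord p.1 p.2) (u :: fs) = 0 := by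
          rw [List.count_eq_zero]
          intro hmem'
          rcases List.mem_cons.mp hmem' with h | h
          · exact absurd h.symm (ne_of_lt hult)
          · have : u ≥ segWord p.1 p.2 := List.rel_of_pairwise_cons hdec h
            exact absurd hult (not_lt_of_ge this)
        have hnot : segWord p.1 p.2 ∉ u :: fs := List.count_eq_zero.mp hcount0
        have hmem' : ∀ v ∈ u :: fs, ∃ r ∈ ps, v = segWord r.1 r.2 := by
          intro v hv
          obtain ⟨r, hrmem, hrv⟩ := hmem v hv
          rcases List.mem_cons.mp hrmem with h | h
          · subst h; exact absurd (hrv ▸ hv) hnot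
          · exact ⟨r, h, hrv⟩
        have ihfs := ihN (u :: fs) ps (by simp at hN ⊢; omega)
          (fun r hr => hval r (List.mem_cons_of_mem _ hr)) hsort.tail hdec hmem'
        rw [List.map_cons, hcount0, PS_cons, List.replicate_zero, List.nil_append]
        exact ihfs

/-! ### segEnum properties -/

lemma segEnum_valid {n : ℕ} : ∀ p ∈ segEnum n, pvalid p ∧ p.2 ≤ n := by
  intro p hp
  unfold segEnum at hp
  simp only [List.mem_flatten, List.mem_map, List.mem_reverse, List.mem_range'_1] at hp
  obtain ⟨L, ⟨k, hk, rfl⟩, hpL⟩ := hp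
  simp only [List.mem_map, List.mem_reverse, List.mem_range'_1] at hpL
  obtain ⟨l, hl, rfl⟩ := hpL
  exact ⟨⟨by omega, by omega⟩, by omega⟩

lemma segEnum_mem {n k l : ℕ} (h1 : 1 ≤ k) (h2 : k ≤ l) (h3 : l ≤ n) :
    (k, l) ∈ segEnum n := by
  unfold segEnum
  simp only [List.mem_flatten, List.mem_map, List.mem_reverse, List.mem_range'_1]
  exact ⟨_, ⟨k, ⟨h1, by omega⟩, rfl⟩, by
    simp only [List.mem_map, List.mem_reverse, List.mem_range'_1]
    exact ⟨l, ⟨h2, by omega⟩, rfl⟩⟩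

lemma segEnum_sorted {n : ℕ} : List.Pairwise (fun x y => plt y x) (segEnum n) := by
  unfold segEnum
  rw [List.pairwise_flatten]
  constructor
  · intro L hL
    simp only [List.mem_map, List.mem_reverse, List.mem_range'_1] at hL
    obtain ⟨k, _, rfl⟩ := hL
    rw [List.pairwise_map, List.pairwise_reverse]
    have := List.pairwise_lt_range' (s := k) (n := n + 1 - k) 1
    refine this.imp ?_
    intro a b hab
    exact Or.inr ⟨rfl, hab⟩
  · rw [List.pairwise_map, List.pairwise_reverse]
    have := List.pairwise_lt_range' (s := 1) (n := n) 1
    refine this.imp ?_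
    intro a b hab
    intro x hx y hy
    simp only [List.mem_map, List.mem_reverse, List.mem_range'_1] at hx hy
    obtain ⟨lx, _, rfl⟩ := hx
    obtain ⟨ly, _, rfl⟩ := hy
    exact Or.inl hab

/-! ### first-difference characterization -/

lemma ltc_iff : ∀ (m1 m2 : List ℕ), m1.length = m2.length →
    (LtC m1 m2 ↔ ∃ t, t < m1.length ∧ (∀ s, s < t → m1.getD s 0 = m2.getD s 0) ∧
      m1.getD t 0 < m2.getD t 0) := by
  intro m1
  induction m1 with
  | nil =>
    intro m2 h
    simp
  | cons a as ih =>
    intro m2 h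
    cases m2 with
    | nil => simp at h
    | cons b bs =>
      simp only [List.length_cons, Nat.add_right_cancel_iff] at h
      constructor
      · intro hl
        rcases (LtC_cons a b as bs).mp hl with hab | ⟨hab, hl'⟩
        · exact ⟨0, by simp, by simp, by simpa using hab⟩
        · obtain ⟨t, ht, hall, hlt⟩ := (ih bs h).mp hl'
          refine ⟨t + 1, by simpa using ht, ?_, by simpa using hlt⟩
          intro s hs
          cases s with
          | zero => simpa using hab
          | succ s => simpa using hall s (by omega)
      · rintro ⟨t, ht, hall, hlt⟩
        cases t with
        | zero => exact Or.inl (by simpa using hlt)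
        | succ t =>
          have hab : a = b := by simpa using hall 0 (by omega)
          refine Or.inr ⟨hab, (ih bs h).mpr ⟨t, by simpa using ht, ?_, by simpa using hlt⟩⟩
          intro s hs
          simpa using hall (s + 1) (by omega)

/-- For dominant words μ, ν over {1,…,n} (given by their canonical factorizations `fs`, `gs`
into weakly decreasing segments): μ < ν in the lexicographic order iff v(μ) ≠ v(ν) and the
first nonzero coordinate of v(ν) − v(μ) is positive. -/
theorem lex_lt_iff_multVec (n : ℕ) (hn : 1 ≤ n) (μ ν : List ℕ)
    (fs gs : List (List ℕ))
    (hfs_dec : List.Chain' (· ≥ ·) fs) (hfs_seg : ∀ u ∈ fs, IsSegment n u)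
    (hμ : fs.flatten = μ)
    (hgs_dec : List.Chain' (· ≥ ·) gs) (hgs_seg : ∀ u ∈ gs, IsSegment n u)
    (hν : gs.flatten = ν) :
    μ < ν ↔
      (multVec n fs ≠ multVec n gs ∧
        ∃ t, t < (segEnum n).length ∧
          (∀ s, s < t → (multVec n fs).getD s 0 = (multVec n gs).getD s 0) ∧
          (multVec n fs).getD t 0 < (multVec n gs).getD t 0) := by
  -- notation
  have hflat : ∀ (hs : List (List ℕ)), List.Chain' (· ≥ ·) hs →
      (∀ u ∈ hs, IsSegment n u) →
      hs.flatten = wordOf (PS (segEnum n) (multVec n hs)) := by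
    intro hs hdec hseg
    have hsorted : List.Pairwise (· ≥ ·) hs := List.isChain_iff_pairwise.mp hdec
    have hmem : ∀ u ∈ hs, ∃ p ∈ segEnum n, u = segWord p.1 p.2 := by
      intro u hu
      obtain ⟨k, l, h1, h2, h3, h4⟩ := hseg u hu
      exact ⟨(k, l), segEnum_mem h1 h2 h3, h4⟩
    have := stepA (hs.length + (segEnum n).length) hs (segEnum n) le_rfl
      (fun p hp => (segEnum_valid p hp).1) segEnum_sorted hsorted hmem
    rw [multVec]
    conv_lhs => rw [this]
    rfl
  have hμ' : μ = wordOf (PS (segEnum n) (multVec n fs)) := by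
    rw [← hμ]; exact hflat fs hfs_dec hfs_seg
  have hν' : ν = wordOf (PS (segEnum n) (multVec n gs)) := by
    rw [← hν]; exact hflat gs hgs_dec hgs_seg
  have hlen1 : (multVec n fs).length = (segEnum n).length := List.length_map _
  have hlen2 : (multVec n gs).length = (segEnum n).length := List.length_map _
  have key : μ < ν ↔ LtC (multVec n fs) (multVec n gs) := by
    rw [hμ', hν']
    exact lemB (segEnum n) (fun p hp => (segEnum_valid p hp).1) segEnum_sorted
      (multVec n fs) (multVec n gs) hlen1 hlen2
  rw [key, ltc_iff _ _ (by rw [hlen1, hlen2]), hlen1]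
  constructor
  · intro h
    refine ⟨?_, h⟩
    obtain ⟨t, ht, hall, hlt⟩ := h
    intro heq
    rw [heq] at hlt
    exact lt_irrefl _ hlt
  · exact fun h => h.2
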